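/- Inverse of a grouplike power series (coefficient form): let c be a ℂ-linear map on the shuffle algebra S with c(e) = 1 for the empty word e and c(u ⧢ v) = c(u)·c(v) for all words u, v. Then for every nonempty word w, Σ_{uv=w} (−1)^{|u|} c(rev(u))·c(v) = 0 and Σ_{uv=w} (−1)^{|v|} c(u)·c(rev(v)) = 0, where the sums range over all factorizations of w as a concatenation w = uv (u or v possibly empty), rev denotes word reversal, and |u| is the length of u. Equivalently, the noncommutative formal power series with coefficients w ↦ (−1)^{|w|} c(rev(w)) is the two-sided inverse of the one with coefficients c. -/
import Mathlib


open scoped BigOperators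

namespace MZVRH

noncomputable section

/-- A word over the two-letter alphabet: `false` stands for `x0`, `true` for `x1`. -/
abbrev Word : Type := List Bool

/-- The shuffle algebra `S`: the free ℂ-vector space on words. -/
abbrev S : Type := Word →₀ ℂ

/-- The word `w` viewed as an element of `S`. -/
def wordS (w : Word) : S := Finsupp.single w 1

/-- Shuffle product of two words, as an element of `S`. -/
def shWord : Word → Word → S
  | [], v => Finsupp.single v 1
  | u, [] => Finsupp.single u 1
  | a :: u, b :: v =>
      (shWord u (b :: v)).mapDomain (a :: ·)
        + (shWord (a :: u) v).mapDomain (b :: ·)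
  termination_by u v => u.length + v.length
  decreasing_by all_goals simp [List.length_cons]

/-- The bilinear extension of the shuffle product to `S`. -/
def sh (x y : S) : S := x.sum fun u a => y.sum fun v b => (a * b) • shWord u v

/-- The word `x0^j`. -/
def x0pow (j : ℕ) : Word := List.replicate j false

/-- The word `x1^i`. -/
def x1pow (i : ℕ) : Word := List.replicate i true

/-- A word is empty or ends in `x1`. -/
def EndsInX1 (w : Word) : Prop := w = [] ∨ w.getLast? = some true

/-- A word is empty or begins with `x0` and ends in `x1`. -/
def BeginsEndsX0X1 (w : Word) : Prop :=
  w = [] ∨ (w.head? = some false ∧ w.getLast? = some true)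

/-- Membership in the subspace `S^0` spanned by the empty word and words ending in `x1`. -/
def InS0 (x : S) : Prop := ∀ w ∈ x.support, EndsInX1 w

/-- Membership in the subspace `S^{10}` spanned by the empty word and words beginning
with `x0` and ending in `x1`. -/
def InS10 (x : S) : Prop := ∀ w ∈ x.support, BeginsEndsX0X1 w

/-- `Σ_j w_j ⧢ x0^j` for a finitely supported family `f : ℕ →₀ S`. -/
def decomp0Sum (f : ℕ →₀ S) : S := f.sum fun j w => sh w (wordS (x0pow j))

/-- `Σ_{i,j} x1^i ⧢ w_{ij} ⧢ x0^j` for a finitely supported family `f : ℕ × ℕ →₀ S`. -/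
def decomp10Sum (f : ℕ × ℕ →₀ S) : S :=
  f.sum fun p w => sh (wordS (x1pow p.1)) (sh w (wordS (x0pow p.2)))

/-- `f` is a decomposition of `u` with coefficients in `S^0`. -/
def HasDecomp0 (u : S) (f : ℕ →₀ S) : Prop := (∀ j, InS0 (f j)) ∧ u = decomp0Sum f

/-- `f` is a decomposition of `u` with coefficients in `S^{10}`. -/
def HasDecomp10 (u : S) (f : ℕ × ℕ →₀ S) : Prop :=
  (∀ p, InS10 (f p)) ∧ u = decomp10Sum f

open Classical in
/-- The regularization map `reg^0 : S → S^0`, the constant term of the decomposition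
of `u` as a polynomial in `x0` with coefficients in `S^0`. -/
def reg0 (u : S) : S := if h : ∃ f, HasDecomp0 u f then h.choose 0 else 0

open Classical in
/-- The regularization map `reg^{10} : S → S^{10}`, the constant term of the decomposition
of `u` as a polynomial in `x0, x1` with coefficients in `S^{10}`. -/
def reg10 (u : S) : S := if h : ∃ f, HasDecomp10 u f then h.choose (0, 0) else 0

/-- `τ`: reverse the word and exchange `x0` with `x1`. -/
def tau (w : Word) : Word := (w.map (fun b => !b)).reverse

/-- The composition `(k1, …, kr)` attached to a word `x0^{k1-1} x1 ⋯ x0^{kr-1} x1 ∈ S^0`. -/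
def toComp : Word → List ℕ
  | [] => []
  | false :: w =>
      match toComp w with
      | [] => []
      | k :: ks => (k + 1) :: ks
  | true :: w => 1 :: toComp w

/-- Strictly decreasing tuples of positive integers `n1 > n2 > ⋯ > nr > 0`. -/
def Tuples (r : ℕ) : Type := {f : Fin r → ℕ // StrictAnti f ∧ ∀ i, 0 < f i}

/-- The multiple polylogarithm `Li_{k1,…,kr}(z) = Σ_{n1 > ⋯ > nr > 0} z^{n1}/(n1^{k1} ⋯ nr^{kr})`,
attached to a composition `ks = (k1, …, kr)`; equal to `1` for the empty composition. -/
def LiComp (ks : List ℕ) (z : ℂ) : ℂ :=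
  ∑' n : Tuples ks.length,
    (if h : 0 < ks.length then z ^ n.1 ⟨0, h⟩ else 1) /
      ∏ i : Fin ks.length, (n.1 i : ℂ) ^ ks.get i

/-- The multiple zeta value `ζ(k1,…,kr) = Σ_{n1 > ⋯ > nr > 0} 1/(n1^{k1} ⋯ nr^{kr})`
attached to a composition; equal to `1` for the empty composition. -/
def zetaComp (ks : List ℕ) : ℂ :=
  ∑' n : Tuples ks.length, 1 / ∏ i : Fin ks.length, (n.1 i : ℂ) ^ ks.get i

/-- The ℂ-linear extension of `w ↦ Li(w; z)` to elements of `S` supported on `S^0` words. -/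
def LiS0 (x : S) (z : ℂ) : ℂ := x.sum fun w c => c * LiComp (toComp w) z

/-- The ℂ-linear extension of `w ↦ ζ(w)` to elements of `S` supported on `S^{10}` words. -/
def zetaS (x : S) : ℂ := x.sum fun w c => c * zetaComp (toComp w)

open Classical in
/-- The extended multiple polylogarithm on `S`:
`Li(u; z) = Σ_j Li(w_j; z) (log z)^j / j!` where `u = Σ_j w_j ⧢ x0^j` with `w_j ∈ S^0`. -/
def Li (u : S) (z : ℂ) : ℂ :=
  if h : ∃ f, HasDecomp0 u f then
    h.choose.sum fun j w => LiS0 w z * Complex.log z ^ j / (Nat.factorial j : ℂ)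
  else 0

/-- The domain `D0 = ℂ ∖ {x ∈ ℝ : x ≥ 1}`. -/
def D0 : Set ℂ := {z | ¬ (z.im = 0 ∧ 1 ≤ z.re)}

/-- The domain `D1 = ℂ ∖ {x ∈ ℝ : x ≤ 0}`. -/
def D1 : Set ℂ := {z | ¬ (z.im = 0 ∧ z.re ≤ 0)}

/-- The ℂ-linear extension of a word-indexed family of functions to `S`. -/
def extLin (h : Word → ℂ → ℂ) (x : S) (z : ℂ) : ℂ := x.sum fun w c => c * h w z

/-- A solution of the additive Riemann–Hilbert problem for multiple polylogarithms. -/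
def RHSol (h0 h1 : Word → ℂ → ℂ) : Prop :=
  -- (0) shuffle homomorphisms with prescribed value on `x0`
  (∀ z ∈ D0 ∩ D1,
      (h0 [] z = 1 ∧ h1 [] z = 1) ∧
      (∀ u v : Word,
          extLin h0 (sh (wordS u) (wordS v)) z = h0 u z * h0 v z ∧
          extLin h1 (sh (wordS u) (wordS v)) z = h1 u z * h1 v z) ∧
      h0 [false] z = Complex.log z ∧ h1 [false] z = Complex.log (1 - z)) ∧
  -- (1) holomorphy and the functional equation
  (∀ w : Word,
      DifferentiableOn ℂ (fun z => extLin h0 (reg0 (wordS w)) z) D0 ∧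
      DifferentiableOn ℂ (fun z => extLin h1 (reg0 (wordS w)) z) D1 ∧
      ∀ z ∈ D0 ∩ D1,
        ∑ k ∈ Finset.range (w.length + 1),
            h1 (tau (w.take k)) z * h0 (w.drop k) z = zetaS (reg10 (wordS w))) ∧
  -- (2) asymptotic condition at infinity
  (∀ w : Word,
      Filter.Tendsto (deriv fun z => extLin h0 (reg0 (wordS w)) z)
        (Bornology.cobounded ℂ ⊓ Filter.principal D0) (nhds 0) ∧
      Filter.Tendsto (deriv fun z => extLin h1 (reg0 (wordS w)) z)
        (Bornology.cobounded ℂ ⊓ Filter.principal D1) (nhds 0)) ∧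
  -- (3) normalization at the origin
  (∀ w : Word, extLin h0 (reg0 (wordS w)) 0 = 0)

lemma shWord_nil_left (v : Word) : shWord [] v = Finsupp.single v 1 := by
  rw [shWord]

lemma shWord_nil_right (u : Word) : shWord u [] = Finsupp.single u 1 := by
  cases u with
  | nil => rw [shWord]
  | cons a u => rw [shWord] <;> simp

lemma shWord_cons_cons (a b : Bool) (u v : Word) :
    shWord (a :: u) (b :: v) =
      (shWord u (b :: v)).mapDomain (a :: ·) + (shWord (a :: u) v).mapDomain (b :: ·) := by
  rw [shWord]

lemma mapDomain_cons_append (x a : Bool) (s : S) :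
    Finsupp.mapDomain (x :: ·) (Finsupp.mapDomain (· ++ [a]) s)
      = Finsupp.mapDomain (· ++ [a]) (Finsupp.mapDomain (x :: ·) s) := by
  rw [← Finsupp.mapDomain_comp, ← Finsupp.mapDomain_comp]
  rfl

lemma shWord_snoc : ∀ (u v : Word) (a b : Bool),
    shWord (u ++ [a]) (v ++ [b]) =
      (shWord u (v ++ [b])).mapDomain (· ++ [a]) + (shWord (u ++ [a]) v).mapDomain (· ++ [b])
  | [], [], a, b => by
      simp [shWord_cons_cons, shWord_nil_left, shWord_nil_right, Finsupp.mapDomain_single,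
        add_comm]
  | [], y :: v, a, b => by
      have IH := shWord_snoc [] v a b
      simp only [List.nil_append, List.cons_append] at IH ⊢
      rw [shWord_cons_cons a y [] (v ++ [b]), IH, shWord_cons_cons a y [] v]
      simp only [shWord_nil_left, Finsupp.mapDomain_add, Finsupp.mapDomain_single,
        mapDomain_cons_append, List.cons_append, List.nil_append]
      abel
  | x :: u, [], a, b => by
      have IH := shWord_snoc u [] a b
      simp only [List.nil_append, List.cons_append] at IH ⊢
      rw [shWord_cons_cons x b (u ++ [a]) [], IH, shWord_cons_cons x b u []]
      simp only [shWord_nil_left, shWord_nil_right, Finsupp.mapDomain_add,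
        Finsupp.mapDomain_single, mapDomain_cons_append, List.cons_append, List.nil_append]
      abel
  | x :: u, y :: v, a, b => by
      have IH1 := shWord_snoc u (y :: v) a b
      have IH2 := shWord_snoc (x :: u) v a b
      simp only [List.nil_append, List.cons_append] at IH1 IH2 ⊢
      rw [shWord_cons_cons x y (u ++ [a]) (v ++ [b]), IH1, IH2,
        shWord_cons_cons x y u (v ++ [b]), shWord_cons_cons x y (u ++ [a]) v]
      simp only [Finsupp.mapDomain_add, mapDomain_cons_append, List.cons_append]
      abel
  termination_by u v => u.length + v.length
  decreasing_by all_goals (simp [List.length_cons]; try omega)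

lemma mapDomain_reverse_shWord : ∀ (u v : Word),
    (shWord u v).mapDomain List.reverse = shWord u.reverse v.reverse
  | [], v => by
      simp [shWord_nil_left, Finsupp.mapDomain_single]
  | a :: u, [] => by
      simp [shWord_nil_right, shWord_nil_left, Finsupp.mapDomain_single]
  | a :: u, b :: v => by
      rw [shWord_cons_cons, Finsupp.mapDomain_add, ← Finsupp.mapDomain_comp,
        ← Finsupp.mapDomain_comp]
      have h1 : (List.reverse ∘ (a :: ·) : Word → Word) = (· ++ [a]) ∘ List.reverse := by
        funext l; simp
      have h2 : (List.reverse ∘ (b :: ·) : Word → Word) = (· ++ [b]) ∘ List.reverse := by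
        funext l; simp
      rw [h1, h2, Finsupp.mapDomain_comp, Finsupp.mapDomain_comp,
        mapDomain_reverse_shWord u (b :: v), mapDomain_reverse_shWord (a :: u) v,
        show (b :: v).reverse = v.reverse ++ [b] from by simp,
        show (a :: u).reverse = u.reverse ++ [a] from by simp]
      exact (shWord_snoc u.reverse v.reverse a b).symm
  termination_by u v => u.length + v.length
  decreasing_by all_goals (simp [List.length_cons]; try omega)

lemma sh_wordS (u v : Word) : sh (wordS u) (wordS v) = shWord u v := by
  simp [sh, wordS, Finsupp.sum_single_index]

/-- Auxiliary family for the telescoping argument. -/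
def Bf (w : Word) (k : ℕ) : S :=
  if 1 ≤ k ∧ k ≤ w.length then
    Finsupp.mapDomain (w.getD (k-1) false :: ·) (shWord (w.take (k-1)).reverse (w.drop k))
  else 0

lemma take_succ_reverse (w : Word) (m : ℕ) (h : m < w.length) :
    (w.take (m+1)).reverse = w.getD m false :: (w.take m).reverse := by
  rw [List.take_succ, List.reverse_append]
  have h1 : w[m]? = some w[m] := List.getElem?_eq_getElem h
  rw [List.getD_eq_getElem w false h, h1]
  rfl

lemma step (w : Word) (hw : w ≠ []) :
    ∀ k ≤ w.length, shWord (w.take k).reverse (w.drop k) = Bf w k + Bf w (k+1) := by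
  intro k hk
  match k with
  | 0 =>
    cases w with
    | nil => exact absurd rfl hw
    | cons a t =>
      have c1 : ¬ (1 ≤ 0 ∧ 0 ≤ (a :: t).length) := by omega
      have c2 : 1 ≤ 1 ∧ 1 ≤ (a :: t).length := ⟨le_refl 1, by simp⟩
      simp only [Bf, if_neg c1, if_pos c2, zero_add]
      simp [shWord_nil_left, Finsupp.mapDomain_single]
  | m + 1 =>
    by_cases hlt : m + 1 < w.length
    · have h1 : (w.take (m+1)).reverse = w.getD m false :: (w.take m).reverse :=
        take_succ_reverse w m (by omega)
      have h2 : w.drop (m+1) = w.getD (m+1) false :: w.drop (m+2) := by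
        rw [List.drop_eq_getElem_cons hlt, List.getD_eq_getElem w false hlt]
      have c1 : 1 ≤ m + 1 ∧ m + 1 ≤ w.length := ⟨by omega, by omega⟩
      have c2 : 1 ≤ m + 2 ∧ m + 2 ≤ w.length := ⟨by omega, by omega⟩
      rw [h1, h2, shWord_cons_cons, ← h1, ← h2]
      simp only [Bf, if_pos c1, if_pos c2, Nat.add_sub_cancel]
    · have hk' : m + 1 = w.length := by omega
      have h1 : (w.take (m+1)).reverse = w.getD m false :: (w.take m).reverse :=
        take_succ_reverse w m (by omega)
      have hd : w.drop (m+1) = [] := List.drop_eq_nil_of_le (by omega)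
      have c1 : 1 ≤ m + 1 ∧ m + 1 ≤ w.length := ⟨by omega, by omega⟩
      have c2 : ¬ (1 ≤ m + 2 ∧ m + 2 ≤ w.length) := by omega
      rw [h1, hd, shWord_nil_right]
      simp only [Bf, if_pos c1, if_neg c2, Nat.add_sub_cancel, hd, shWord_nil_right,
        Finsupp.mapDomain_single, add_zero]

lemma key (c : S →ₗ[ℂ] ℂ)
    (hmul : ∀ u v : Word, c (sh (wordS u) (wordS v)) = c (wordS u) * c (wordS v))
    (w : Word) (hw : w ≠ []) :
    ∑ k ∈ Finset.range (w.length + 1),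
      (-1 : ℂ) ^ k * c (wordS (w.take k).reverse) * c (wordS (w.drop k)) = 0 := by
  have h : ∀ k ∈ Finset.range (w.length + 1),
      (-1 : ℂ) ^ k * c (wordS (w.take k).reverse) * c (wordS (w.drop k))
        = (fun k => (-1 : ℂ) ^ k * c (Bf w k)) k
          - (fun k => (-1 : ℂ) ^ k * c (Bf w k)) (k+1) := by
    intro k hk
    have hk' : k ≤ w.length := Nat.lt_succ_iff.mp (Finset.mem_range.mp hk)
    have hstep := step w hw k hk'
    calc (-1 : ℂ) ^ k * c (wordS (w.take k).reverse) * c (wordS (w.drop k))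
        = (-1 : ℂ) ^ k * c (sh (wordS (w.take k).reverse) (wordS (w.drop k))) := by
          rw [hmul]; ring
      _ = (-1 : ℂ) ^ k * (c (Bf w k) + c (Bf w (k+1))) := by
          rw [sh_wordS, hstep, map_add]
      _ = _ := by simp only [pow_succ]; ring
  rw [Finset.sum_congr rfl h, Finset.sum_range_sub']
  have h0 : Bf w 0 = 0 := by simp [Bf]
  have h1 : Bf w (w.length + 1) = 0 := by
    have hcond : ¬ (1 ≤ w.length + 1 ∧ w.length + 1 ≤ w.length) := by omega
    simp [Bf, if_neg hcond]
  simp [h0, h1]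
/-- Inverse of a grouplike power series, in coefficient form: if
`c : S → ℂ` is linear with `c(e) = 1` and `c(u ⧢ v) = c(u) c(v)` for all words, then for every
nonempty word `w`, `Σ_{uv=w} (-1)^{|u|} c(rev u) c(v) = 0` and
`Σ_{uv=w} (-1)^{|v|} c(u) c(rev v) = 0`. -/
theorem grouplike_inverse (c : S →ₗ[ℂ] ℂ) (hone : c (wordS []) = 1)
    (hmul : ∀ u v : Word, c (sh (wordS u) (wordS v)) = c (wordS u) * c (wordS v))
    (w : Word) (hw : w ≠ []) :
    (∑ k ∈ Finset.range (w.length + 1),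
        (-1 : ℂ) ^ k * c (wordS (w.take k).reverse) * c (wordS (w.drop k))) = 0 ∧
    (∑ k ∈ Finset.range (w.length + 1),
        (-1 : ℂ) ^ (w.length - k) * c (wordS (w.take k)) * c (wordS (w.drop k).reverse)) = 0 := by
  refine ⟨key c hmul w hw, ?_⟩
  set c' : S →ₗ[ℂ] ℂ := c.comp (Finsupp.lmapDomain ℂ ℂ List.reverse) with hc'def
  have hc' : ∀ u : Word, c' (wordS u) = c (wordS u.reverse) := by
    intro u
    simp [hc'def, wordS, Finsupp.lmapDomain_apply, Finsupp.mapDomain_single]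
  have hmul' : ∀ u v : Word, c' (sh (wordS u) (wordS v)) = c' (wordS u) * c' (wordS v) := by
    intro u v
    have hR : Finsupp.mapDomain List.reverse (sh (wordS u) (wordS v))
        = sh (wordS u.reverse) (wordS v.reverse) := by
      rw [sh_wordS, sh_wordS]
      exact mapDomain_reverse_shWord u v
    rw [hc' u, hc' v, hc'def]
    simp only [LinearMap.comp_apply, Finsupp.lmapDomain_apply]
    rw [hR, hmul]
  have hkey := key c' hmul' w.reverse (by simpa using hw)
  rw [List.length_reverse] at hkey
  rw [← Finset.sum_range_reflect]
  simp only [Nat.add_sub_cancel]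
  rw [← hkey]
  refine Finset.sum_congr rfl ?_
  intro j hj
  have hj' : j ≤ w.length := Nat.lt_succ_iff.mp (Finset.mem_range.mp hj)
  rw [hc', hc', List.take_reverse, List.drop_reverse, List.reverse_reverse,
    List.reverse_reverse, Nat.sub_sub_self hj']
  ring

end

end MZVRH
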